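/- Let (ξ_{i,j})_{(i,j)∈ A×B} be a random matrix indexed by finite sets A and B, with each entry taking values in a measurable space. If the columns (ξ_{·,j})_{j∈B} are mutually independent (as random vectors) and the rows (ξ_{i,·})_{i∈A} are mutually independent (as random vectors), then all entries ξ_{i,j}, (i,j) ∈ A×B, are mutually independent. -/

import Mathlib

open MeasureTheory ProbabilityTheory

/-- if the columns of a random matrix are mutually independent and its rows are
mutually independent, then all entries are mutually independent. -/
theorem indep_entries_of_indep_rows_cols {Ω : Type*} [MeasureSpace Ω]
    [IsProbabilityMeasure (ℙ : Measure Ω)]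
    {A B : Type*} [Fintype A] [Fintype B]
    {E : A → B → Type*} [∀ i j, MeasurableSpace (E i j)]
    (ξ : ∀ i j, Ω → E i j)
    (hcol : iIndepFun (fun j ω => (fun i => ξ i j ω)) ℙ)
    (hrow : iIndepFun (fun i ω => (fun j => ξ i j ω)) ℙ) :
    iIndepFun (fun (p : A × B) ω => ξ p.1 p.2 ω) ℙ := by
  classical
  -- entries within a fixed column are independent, since they are measurable functions
  -- of the (mutually independent) rows
  have hcolint : ∀ j : B, iIndepFun
      (fun i ω => ξ i j ω) ℙ :=
    fun j => hrow.comp (fun i (x : ∀ j', E i j') => x j) (fun i => measurable_pi_apply j)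
  rw [iIndepFun_iff_measure_inter_preimage_eq_mul]
  intro S sets hsets
  -- fibers of S over columns
  set T : B → Finset A := fun j => Finset.univ.filter (fun i => (i, j) ∈ S) with hT
  -- column events
  set U : ∀ j, Set (∀ i, E i j) := fun j => ⋂ i ∈ T j, (fun x => x i) ⁻¹' sets (i, j) with hU
  have hUmeas : ∀ j, MeasurableSet (U j) := by
    intro j
    refine MeasurableSet.biInter (Finset.countable_toSet _) (fun i hi => ?_)
    exact (measurable_pi_apply i) ((hsets (i, j)) ((Finset.mem_filter.mp hi).2))
  have hInter : (⋂ p ∈ S, (fun ω => ξ p.1 p.2 ω) ⁻¹' sets p)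
      = ⋂ j ∈ (Finset.univ : Finset B), (fun ω i => ξ i j ω) ⁻¹' U j := by
    ext ω
    simp only [Set.mem_iInter, Set.mem_preimage, hU, hT, Finset.mem_filter,
      Finset.mem_univ, true_and]
    constructor
    · intro h j _ i hi
      exact h (i, j) hi
    · intro h p hp
      exact h p.2 (by simp) p.1 (by simpa using hp)
  have hcolinner : ∀ j, (fun ω i => ξ i j ω) ⁻¹' U j
      = ⋂ i ∈ T j, (fun ω => ξ i j ω) ⁻¹' sets (i, j) := by
    intro j
    ext ω
    simp [hU]
  rw [hInter,
    hcol.measure_inter_preimage_eq_mul Finset.univ (sets := U) (fun j _ => hUmeas j)]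
  have hcolprod : ∀ j, (ℙ : Measure Ω) ((fun ω i => ξ i j ω) ⁻¹' U j)
      = ∏ i ∈ T j, (ℙ : Measure Ω) ((fun ω => ξ i j ω) ⁻¹' sets (i, j)) := by
    intro j
    rw [hcolinner j]
    exact (hcolint j).measure_inter_preimage_eq_mul (T j)
      (sets := fun i => sets (i, j))
      (fun i hi => (hsets (i, j)) ((Finset.mem_filter.mp hi).2))
  simp only [hcolprod]
  -- regroup the product over pairs fiberwise over columns
  rw [← Finset.prod_fiberwise S Prod.snd
    (fun p => (ℙ : Measure Ω) ((fun ω => ξ p.1 p.2 ω) ⁻¹' sets p))]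
  refine Finset.prod_congr rfl (fun j _ => ?_)
  refine Finset.prod_bij (fun i _ => (i, j)) ?_ ?_ ?_ ?_
  · intro i hi
    exact Finset.mem_filter.mpr ⟨(Finset.mem_filter.mp hi).2, rfl⟩
  · intro i _ i' _ h
    exact (Prod.mk.injEq _ _ _ _).mp h |>.1
  · intro p hp
    obtain ⟨hpS, hpj⟩ := Finset.mem_filter.mp hp
    refine ⟨p.1, Finset.mem_filter.mpr ⟨Finset.mem_univ _, ?_⟩, ?_⟩
    · rwa [← hpj, Prod.mk.eta]
    · exact Prod.ext rfl hpj.symm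
  · intro i _
    rfl
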